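/- arXiv:1902.02696 — 2 statements merged into one kernel-verified Lean document; each statement's English description precedes it below -/
import Mathlib

section
/- For the partial order on boolean valuations defined by β₁ ⪯ β₂ iff ∀s, β₁(s) → β₂(s): a valuation β is a minimal satisfying valuation of μ₀ ∧ trap-constraint(N) (where μ₀ = ⋁_{m₀(s)=1} s) if and only if W_β is a minimal (with respect to set inclusion among nonempty sets) initially marked trap of (N, m₀). -/
/-- `β` satisfies the trap constraint of the Petri net with edges `Esp`, `Eps`. -/
def SatTrapConstraint {S T : Type*} (Esp : S → T → Bool) (Eps : T → S → Bool)
    (β : S → Bool) : Prop :=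
  ∀ t : T, (∃ s : S, Esp s t = true ∧ β s = true) → ∃ s : S, Eps t s = true ∧ β s = true

/-- `β` satisfies `μ₀ ∧ trap-constraint(N)`, where `μ₀ = ⋁_{m₀ s = 1} s`. -/
def SatMuTrap {S T : Type*} (Esp : S → T → Bool) (Eps : T → S → Bool)
    (m₀ : S → ℕ) (β : S → Bool) : Prop :=
  (∃ s : S, m₀ s = 1 ∧ β s = true) ∧ SatTrapConstraint Esp Eps β

/-- Minimal satisfying valuation w.r.t. `β₁ ⪯ β₂ iff ∀ s, β₁ s → β₂ s`. -/
def MinSat {S T : Type*} (Esp : S → T → Bool) (Eps : T → S → Bool)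
    (m₀ : S → ℕ) (β : S → Bool) : Prop :=
  SatMuTrap Esp Eps m₀ β ∧
    ∀ β' : S → Bool, (∀ s, β' s = true → β s = true) → β' ≠ β →
      ¬ SatMuTrap Esp Eps m₀ β'

def IsTrap {S T : Type*} (Esp : S → T → Bool) (Eps : T → S → Bool) (W : Set S) : Prop :=
  ∀ t : T, (∃ s ∈ W, Esp s t = true) → ∃ s ∈ W, Eps t s = true

/-- An initially marked trap of `(N, m₀)`. -/
def IMT {S T : Type*} (Esp : S → T → Bool) (Eps : T → S → Bool)
    (m₀ : S → ℕ) (W : Set S) : Prop :=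
  IsTrap Esp Eps W ∧ ∃ s ∈ W, m₀ s = 1

/-- A minimal IMT: no nonempty strict subset is an IMT. -/
def MinIMT {S T : Type*} (Esp : S → T → Bool) (Eps : T → S → Bool)
    (m₀ : S → ℕ) (W : Set S) : Prop :=
  IMT Esp Eps m₀ W ∧
    ∀ W' : Set S, W' ⊆ W → W'.Nonempty → W' ≠ W → ¬ IMT Esp Eps m₀ W'

/-- `β` is a minimal satisfying valuation of `μ₀ ∧ trap-constraint(N)` iff
`W_β = {s | β s = true}` is a minimal initially marked trap of `(N, m₀)`. -/
theorem stmt6 {S T : Type*} (Esp : S → T → Bool) (Eps : T → S → Bool)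
    (m₀ : S → ℕ) (β : S → Bool) :
    MinSat Esp Eps m₀ β ↔ MinIMT Esp Eps m₀ {s : S | β s = true} := by
  classical
  have hsat : ∀ γ : S → Bool, SatMuTrap Esp Eps m₀ γ ↔ IMT Esp Eps m₀ {s | γ s = true} := by
    intro γ
    constructor
    · rintro ⟨⟨s, hm, hb⟩, htr⟩
      refine ⟨fun t ht => ?_, s, hb, hm⟩
      obtain ⟨s', hs', he⟩ := ht
      obtain ⟨s'', he'', hb''⟩ := htr t ⟨s', he, hs'⟩
      exact ⟨s'', hb'', he''⟩
    · rintro ⟨htr, s, hb, hm⟩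
      refine ⟨⟨s, hm, hb⟩, fun t ht => ?_⟩
      obtain ⟨s', he', hb'⟩ := ht
      obtain ⟨s'', hb'', he''⟩ := htr t ⟨s', hb', he'⟩
      exact ⟨s'', he'', hb''⟩
  constructor
  · rintro ⟨h1, h2⟩
    refine ⟨(hsat β).1 h1, ?_⟩
    intro W' hsub hne hneq hIMT
    set β' : S → Bool := fun s => decide (s ∈ W') with hβ'
    have hset : {s | β' s = true} = W' := by
      ext s; simp [hβ']
    have hle : ∀ s, β' s = true → β s = true := by
      intro s hs
      have : s ∈ W' := by simpa [hβ'] using hs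
      exact hsub this
    have hneq' : β' ≠ β := by
      intro h
      apply hneq
      rw [← hset, h]
    exact h2 β' hle hneq' ((hsat β').2 (by rwa [hset]))
  · rintro ⟨h1, h2⟩
    refine ⟨(hsat β).2 h1, ?_⟩
    intro β' hle hneq hsat'
    have hIMT' := (hsat β').1 hsat'
    have hsub : {s | β' s = true} ⊆ {s | β s = true} := fun s hs => hle s hs
    have hne : ({s | β' s = true} : Set S).Nonempty := by
      obtain ⟨⟨s, _, hb⟩, _⟩ := hsat'
      exact ⟨s, hb⟩
    have hneq' : {s | β' s = true} ≠ {s | β s = true} := by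
      intro h
      apply hneq
      funext s
      have := Set.ext_iff.1 h s
      simp only [Set.mem_setOf_eq] at this
      cases hb : β' s <;> cases hb' : β s <;> simp_all
    exact h2 _ hsub hne hneq' hIMT'
end

section
/- Positivation commutes with booleanization up to equivalence: for a WS1S sentence φ over predicate symbols and n > 0, the propositional formulas pos(B_n(φ)) and B_n(Pos(φ)) are logically equivalent, given that (i) pos is the propositional positivation satisfying f ≡min pos(f) with pos(f) positive, (ii) Pos is any WS1S positivation satisfying φ ≡min Pos(φ) with Pos(φ) positive (all predicate symbols under an even number of negations), (iii) booleanization preserves and reflects models via β_S, and (iv) two positive propositional formulas are equivalent iff they are minimally equivalent. -/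
/-- WS1S terms: `0̄`, first-order variables, successor. -/
inductive WTerm
  | zero
  | fvar (x : ℕ)
  | succ (t : WTerm)

/-- Term evaluation over the universe `[n]`, with the bounded successor
`s(x) = x+1` for `x < n−1` and `s(n−1) = n−1`. -/
def WTerm.eval (n : ℕ) (ν : ℕ → ℕ) : WTerm → ℕ
  | .zero => 0
  | .fvar x => ν x
  | .succ t => min (t.eval n ν + 1) (n - 1)

/-- The ground index of a term, under an environment `e` assigning to each
first-order variable `x` the ground index `i` of the term `s^i(0̄)` it stands for. -/
def WTerm.gidx (e : ℕ → ℕ) : WTerm → ℕ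
  | .zero => 0
  | .fvar x => e x
  | .succ t => t.gidx e + 1

def WTerm.vars : WTerm → Set ℕ
  | .zero => ∅
  | .fvar x => {x}
  | .succ t => t.vars

/-- WS1S formulas: equalities, monadic predicate atoms, set-variable atoms,
conjunction, negation, first- and second-order existential quantifiers. -/
inductive WForm
  | eq (t₁ t₂ : WTerm)
  | pr (p : ℕ) (t : WTerm)
  | sv (X : ℕ) (t : WTerm)
  | and (a b : WForm)
  | not (a : WForm)
  | exF (x : ℕ) (a : WForm)
  | exS (X : ℕ) (a : WForm)

/-- Satisfaction over the structure `([n], ν, ι, μ)`. -/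
def WForm.Sat (n : ℕ) (ν : ℕ → ℕ) (ι μ : ℕ → Set ℕ) : WForm → Prop
  | .eq t₁ t₂ => t₁.eval n ν = t₂.eval n ν
  | .pr p t => t.eval n ν ∈ ι p
  | .sv X t => t.eval n ν ∈ μ X
  | .and a b => a.Sat n ν ι μ ∧ b.Sat n ν ι μ
  | .not a => ¬ a.Sat n ν ι μ
  | .exF x a => ∃ i < n, a.Sat n (Function.update ν x i) ι μ
  | .exS X a => ∃ S : Set ℕ, S ⊆ {i | i < n} ∧ a.Sat n ν ι (Function.update μ X S)

/-- Free first-order variables. -/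
def WForm.freeF : WForm → Set ℕ
  | .eq t₁ t₂ => t₁.vars ∪ t₂.vars
  | .pr _ t => t.vars
  | .sv _ t => t.vars
  | .and a b => a.freeF ∪ b.freeF
  | .not a => a.freeF
  | .exF x a => a.freeF \ {x}
  | .exS _ a => a.freeF

/-- Free second-order (set) variables. -/
def WForm.freeS : WForm → Set ℕ
  | .eq _ _ => ∅
  | .pr _ _ => ∅
  | .sv X _ => {X}
  | .and a b => a.freeS ∪ b.freeS
  | .not a => a.freeS
  | .exF _ a => a.freeS
  | .exS X a => a.freeS \ {X}

/-- Propositional formulas over the variables `pr_j`, coded as pairs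
`(predicate symbol, position)`. -/
inductive PF
  | const (b : Bool)
  | pvar (v : ℕ × ℕ)
  | and (f g : PF)
  | or (f g : PF)
  | not (f : PF)

def PF.Sat (β : ℕ × ℕ → Prop) : PF → Prop
  | .const b => b = true
  | .pvar v => β v
  | .and f g => f.Sat β ∧ g.Sat β
  | .or f g => f.Sat β ∨ g.Sat β
  | .not f => ¬ f.Sat β

def bigOr (l : List PF) : PF := l.foldr PF.or (PF.const false)

/-- The specified interpretation of the ground equality `s^i(0̄) = s^j(0̄)`:
`i = j ∨ (i ≥ n−1 ∧ j ≥ n−1)`. -/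
def eqB (n i j : ℕ) : Bool := decide (i = j ∨ (n - 1 ≤ i ∧ n - 1 ≤ j))

/-- Booleanization `B_n`.  The environments `e` (resp. `E`) record, for each free
first-order (resp. second-order) variable, the ground index (resp. set of ground
indices) substituted for it; quantifiers are unfolded to finite disjunctions
over `[n]` (resp. over subsets of `[n]`). -/
def boolize (n : ℕ) : WForm → (ℕ → ℕ) → (ℕ → List ℕ) → PF
  | .eq t₁ t₂, e, _ => .const (eqB n (t₁.gidx e) (t₂.gidx e))
  | .pr p t, e, _ => .pvar (p, min (t.gidx e) (n - 1))
  | .sv X t, e, E => .const ((E X).any (fun i => eqB n (t.gidx e) i))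
  | .and a b, e, E => .and (boolize n a e E) (boolize n b e E)
  | .not a, e, E => .not (boolize n a e E)
  | .exF x a, e, E =>
      bigOr (((List.range n).map (fun i => boolize n a (Function.update e x i) E)))
  | .exS X a, e, E =>
      bigOr (((List.range n).sublists.map (fun S => boolize n a e (Function.update E X S))))

/-- The boolean valuation `β_S` of a structure: `β_S (pr, j)` holds iff the
`j`-fold bounded successor of `0`, namely `min j (n−1)`, lies in `ι pr`. -/
def betaS (n : ℕ) (ι : ℕ → Set ℕ) : ℕ × ℕ → Prop :=
  fun v => min v.2 (n - 1) ∈ ι v.1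

/-- `PosIn b f`: under current parity `b` (true = even number of enclosing
negations), every propositional variable of `f` occurs positively. -/
def PF.PosIn : Bool → PF → Prop
  | _, .const _ => True
  | b, .pvar _ => b = true
  | b, .and f g => f.PosIn b ∧ g.PosIn b
  | b, .or f g => f.PosIn b ∧ g.PosIn b
  | b, .not f => f.PosIn (!b)

/-- A positive propositional formula: every variable under an even number of
negations. -/
def PF.Positive (f : PF) : Prop := f.PosIn true

/-- Positivity for WS1S formulas: every predicate symbol occurs under an even
number of negations. -/
def WForm.PosIn : Bool → WForm → Prop
  | _, .eq _ _ => True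
  | b, .pr _ _ => b = true
  | _, .sv _ _ => True
  | b, .and f g => f.PosIn b ∧ g.PosIn b
  | b, .not f => f.PosIn (!b)
  | b, .exF _ f => f.PosIn b
  | b, .exS _ f => f.PosIn b

def WForm.Positive (φ : WForm) : Prop := φ.PosIn true

/-- Minimal model of a propositional formula, w.r.t.
`β₁ ⪯ β₂ iff ∀ v, β₁ v → β₂ v`. -/
def PF.MinModel (f : PF) (β : ℕ × ℕ → Prop) : Prop :=
  f.Sat β ∧ ∀ β' : ℕ × ℕ → Prop, (∀ v, β' v → β v) → β' ≠ β → ¬ f.Sat β'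

/-- Minimal equivalence of propositional formulas. -/
def PF.EquivMin (f g : PF) : Prop := ∀ β, f.MinModel β ↔ g.MinModel β

/-- Minimal model of a WS1S formula w.r.t. `⊑`, i.e. pointwise inclusion of the
predicate interpretations (over the same universe `[n]`, with `ν`, `μ` fixed). -/
def WForm.MinModel (n : ℕ) (ν : ℕ → ℕ) (μ : ℕ → Set ℕ) (φ : WForm)
    (ι : ℕ → Set ℕ) : Prop :=
  φ.Sat n ν ι μ ∧ (∀ p, ι p ⊆ {i | i < n}) ∧
    ∀ ι' : ℕ → Set ℕ, (∀ p, ι' p ⊆ ι p) → ι' ≠ ι → ¬ φ.Sat n ν ι' μ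

/-- Minimal equivalence of WS1S formulas. -/
def WForm.EquivMin (n : ℕ) (ν : ℕ → ℕ) (μ : ℕ → Set ℕ) (φ ψ : WForm) : Prop :=
  ∀ ι, φ.MinModel n ν μ ι ↔ ψ.MinModel n ν μ ι

/-- Variables of a propositional formula. -/
def PF.vars : PF → Set (ℕ × ℕ)
  | .const _ => ∅
  | .pvar v => {v}
  | .and f g => f.vars ∪ g.vars
  | .or f g => f.vars ∪ g.vars
  | .not f => f.vars

lemma PF.sat_congr {f : PF} {β β' : ℕ × ℕ → Prop}
    (h : ∀ v ∈ f.vars, (β v ↔ β' v)) : f.Sat β ↔ f.Sat β' := by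
  induction f with
  | const b => exact Iff.rfl
  | pvar v => exact h v rfl
  | and f g ihf ihg =>
      exact and_congr (ihf fun v hv => h v (Or.inl hv)) (ihg fun v hv => h v (Or.inr hv))
  | or f g ihf ihg =>
      exact or_congr (ihf fun v hv => h v (Or.inl hv)) (ihg fun v hv => h v (Or.inr hv))
  | not f ihf => exact not_congr (ihf h)

lemma bigOr_vars {l : List PF} {v : ℕ × ℕ} :
    v ∈ (bigOr l).vars ↔ ∃ f ∈ l, v ∈ f.vars := by
  induction l with
  | nil => simp [bigOr, PF.vars]
  | cons f l ih =>
      simp only [bigOr, List.foldr] at ih ⊢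
      show v ∈ f.vars ∪ _ ↔ _
      simp [Set.mem_union, ih]

lemma boolize_vars_lt (n : ℕ) (hn : 0 < n) :
    ∀ (ψ : WForm) (e : ℕ → ℕ) (E : ℕ → List ℕ) (v : ℕ × ℕ),
      v ∈ (boolize n ψ e E).vars → v.2 < n := by
  intro ψ
  induction ψ with
  | eq t₁ t₂ => intro e E v hv; exact absurd hv (by simp [boolize, PF.vars])
  | pr p t =>
      intro e E v hv
      simp only [boolize, PF.vars, Set.mem_singleton_iff] at hv
      subst hv
      exact lt_of_le_of_lt (min_le_right _ _) (Nat.sub_lt hn one_pos)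
  | sv X t => intro e E v hv; exact absurd hv (by simp [boolize, PF.vars])
  | and a b iha ihb =>
      intro e E v hv
      rcases hv with hv | hv
      · exact iha e E v hv
      · exact ihb e E v hv
  | not a iha => intro e E v hv; exact iha e E v hv
  | exF x a iha =>
      intro e E v hv
      rcases bigOr_vars.mp hv with ⟨f, hf, hvf⟩
      rcases List.mem_map.mp hf with ⟨i, _, rfl⟩
      exact iha _ E v hvf
  | exS X a iha =>
      intro e E v hv
      rcases bigOr_vars.mp hv with ⟨f, hf, hvf⟩
      rcases List.mem_map.mp hf with ⟨S, _, rfl⟩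
      exact iha e _ v hvf

lemma bigOr_posIn {b : Bool} {l : List PF} (h : ∀ f ∈ l, PF.PosIn b f) :
    PF.PosIn b (bigOr l) := by
  induction l with
  | nil => exact trivial
  | cons f l ih =>
      exact ⟨h f List.mem_cons_self, ih fun g hg => h g (List.mem_cons_of_mem f hg)⟩

lemma boolize_posIn (n : ℕ) :
    ∀ (ψ : WForm) (b : Bool) (e : ℕ → ℕ) (E : ℕ → List ℕ),
      ψ.PosIn b → (boolize n ψ e E).PosIn b := by
  intro ψ
  induction ψ with
  | eq t₁ t₂ => intro b e E _; exact trivial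
  | pr p t => intro b e E h; exact h
  | sv X t => intro b e E _; exact trivial
  | and a c iha ihc => intro b e E h; exact ⟨iha b e E h.1, ihc b e E h.2⟩
  | not a iha => intro b e E h; exact iha (!b) e E h
  | exF x a iha =>
      intro b e E h
      apply bigOr_posIn
      intro f hf
      rcases List.mem_map.mp hf with ⟨i, _, rfl⟩
      exact iha b _ E h
  | exS X a iha =>
      intro b e E h
      apply bigOr_posIn
      intro f hf
      rcases List.mem_map.mp hf with ⟨S, _, rfl⟩
      exact iha b e _ h

/-- A minimal model is false at every variable not occurring in the formula. -/
lemma minModel_supported {f : PF} {β : ℕ × ℕ → Prop} (h : f.MinModel β)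
    {v : ℕ × ℕ} (hv : v ∉ f.vars) : ¬ β v := by
  intro hβv
  set β' : ℕ × ℕ → Prop := fun w => β w ∧ w ≠ v with hβ'
  have hle : ∀ w, β' w → β w := fun w hw => hw.1
  have hne : β' ≠ β := by
    intro hEq
    have : β' v ↔ β v := by rw [hEq]
    exact (this.mpr hβv).2 rfl
  have hsat : f.Sat β' := by
    refine (PF.sat_congr ?_).mp h.1
    intro w hw
    constructor
    · intro hβw; exact ⟨hβw, fun hwv => hv (hwv ▸ hw)⟩
    · exact fun hw' => hw'.1
  exact h.2 β' hle hne hsat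

/-- Correspondence between minimal boolean models (supported below `n`) and
minimal WS1S models. -/
lemma transfer (n : ℕ) (hn : 0 < n) (ν : ℕ → ℕ) (μ : ℕ → Set ℕ)
    (e : ℕ → ℕ) (E : ℕ → List ℕ) (ψ : WForm)
    (hB : ∀ ι : ℕ → Set ℕ, ψ.Sat n ν ι μ ↔ (boolize n ψ e E).Sat (betaS n ι))
    (β : ℕ × ℕ → Prop) (hsupp : ∀ v : ℕ × ℕ, β v → v.2 < n) :
    (boolize n ψ e E).MinModel β ↔
      ψ.MinModel n ν μ (fun p => {i | β (p, i)}) := by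
  set ι : ℕ → Set ℕ := fun p => {i | β (p, i)} with hι
  -- betaS of a supported interpretation agrees with its valuation on small vars
  have hagree : ∀ (ι' : ℕ → Set ℕ), (∀ p, ι' p ⊆ {i | i < n}) →
      ∀ v : ℕ × ℕ, v.2 < n → (betaS n ι' v ↔ v.2 ∈ ι' v.1) := by
    intro ι' _ v hv
    have : min v.2 (n - 1) = v.2 := min_eq_left (Nat.le_sub_one_of_lt hv)
    simp [betaS, this]
  have hιsub : ∀ p, ι p ⊆ {i | i < n} := fun p i hi => hsupp (p, i) hi
  have hsat_iff : ∀ (ι' : ℕ → Set ℕ), (∀ p, ι' p ⊆ {i | i < n}) →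
      (ψ.Sat n ν ι' μ ↔ (boolize n ψ e E).Sat (fun v => v.2 ∈ ι' v.1)) := by
    intro ι' hι'
    rw [hB ι']
    exact PF.sat_congr fun v hv =>
      hagree ι' hι' v (boolize_vars_lt n hn ψ e E v hv)
  have hβeq : (fun v : ℕ × ℕ => v.2 ∈ ι v.1) = β := by
    funext v; rfl
  constructor
  · rintro ⟨hsat, hmin⟩
    refine ⟨?_, hιsub, ?_⟩
    · rw [hsat_iff ι hιsub, hβeq]; exact hsat
    · intro ι' hsub hne hsat'
      have hι'sub : ∀ p, ι' p ⊆ {i | i < n} := fun p => (hsub p).trans (hιsub p)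
      have hsatβ' : (boolize n ψ e E).Sat (fun v => v.2 ∈ ι' v.1) :=
        (hsat_iff ι' hι'sub).mp hsat'
      refine hmin (fun v => v.2 ∈ ι' v.1) ?_ ?_ hsatβ'
      · intro v hv; rw [← hβeq]; exact hsub v.1 hv
      · intro hEq
        apply hne
        funext p
        ext i
        exact iff_of_eq (congrFun hEq (p, i))
  · rintro ⟨hsat, _, hmin⟩
    constructor
    · rw [← hβeq]; exact (hsat_iff ι hιsub).mp hsat
    · intro β' hle hne hsat'
      set ι' : ℕ → Set ℕ := fun p => {i | β' (p, i)} with hι'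
      have hsub : ∀ p, ι' p ⊆ ι p := fun p i hi => hle (p, i) hi
      have hι'sub : ∀ p, ι' p ⊆ {i | i < n} := fun p => (hsub p).trans (hιsub p)
      have hβ'eq : (fun v : ℕ × ℕ => v.2 ∈ ι' v.1) = β' := by funext v; rfl
      have hneι : ι' ≠ ι := by
        intro hEq
        apply hne
        rw [← hβ'eq, ← hβeq, hEq]
      exact hmin ι' hsub hneι ((hsat_iff ι' hι'sub).mpr (hβ'eq ▸ hsat'))

/-- Positivation commutes with booleanization up to logical equivalence:
given (i) a propositional positivation `pos` (producing positive formulas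
minimally equivalent to their input), (ii) a WS1S positivation `Pos` of the
sentence `φ` (positive and minimally equivalent to `φ`), (iii) correctness of
booleanization on the relevant sentences, and (iv) the fact that two positive
propositional formulas are equivalent iff they are minimally equivalent,
then `pos(B_n(φ)) ≡ B_n(Pos(φ))`. -/
theorem stmt15 (n : ℕ) (hn : 0 < n) (φ : WForm)
    (hsent : φ.freeF = ∅ ∧ φ.freeS = ∅)
    (ν : ℕ → ℕ) (μ : ℕ → Set ℕ) (hν : ∀ x, ν x < n)
    (e : ℕ → ℕ) (E : ℕ → List ℕ)
    (pos : PF → PF)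
    (hpos : ∀ f : PF, (pos f).Positive ∧ f.EquivMin (pos f))
    (Pos : WForm → WForm)
    (hPosPos : (Pos φ).Positive)
    (hPosSent : (Pos φ).freeF = ∅ ∧ (Pos φ).freeS = ∅)
    (hPosMin : WForm.EquivMin n ν μ φ (Pos φ))
    (hBn : ∀ ψ : WForm, ψ.freeF = ∅ → ψ.freeS = ∅ →
      ∀ ι : ℕ → Set ℕ, ψ.Sat n ν ι μ ↔ (boolize n ψ e E).Sat (betaS n ι))
    (hposequiv : ∀ f g : PF, f.Positive → g.Positive →
      (f.EquivMin g ↔ ∀ β, f.Sat β ↔ g.Sat β)) :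
    ∀ β : ℕ × ℕ → Prop,
      (pos (boolize n φ e E)).Sat β ↔ (boolize n (Pos φ) e E).Sat β := by
  have hBφ := hBn φ hsent.1 hsent.2
  have hBP := hBn (Pos φ) hPosSent.1 hPosSent.2
  -- Bφ and B(Pos φ) are minimally equivalent
  have hmid : (boolize n φ e E).EquivMin (boolize n (Pos φ) e E) := by
    intro β
    constructor
    · intro h
      have hsupp : ∀ v : ℕ × ℕ, β v → v.2 < n := fun v hv =>
        by_contra fun hlt =>
          minModel_supported h (fun hmem => hlt (boolize_vars_lt n hn φ e E v hmem)) hv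
      exact (transfer n hn ν μ e E (Pos φ) hBP β hsupp).mpr
        ((hPosMin _).mp ((transfer n hn ν μ e E φ hBφ β hsupp).mp h))
    · intro h
      have hsupp : ∀ v : ℕ × ℕ, β v → v.2 < n := fun v hv =>
        by_contra fun hlt =>
          minModel_supported h (fun hmem => hlt (boolize_vars_lt n hn (Pos φ) e E v hmem)) hv
      exact (transfer n hn ν μ e E φ hBφ β hsupp).mpr
        ((hPosMin _).mpr ((transfer n hn ν μ e E (Pos φ) hBP β hsupp).mp h))
  have hEq : (pos (boolize n φ e E)).EquivMin (boolize n (Pos φ) e E) :=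
    fun β => (((hpos (boolize n φ e E)).2 β).symm).trans (hmid β)
  exact (hposequiv _ _ (hpos (boolize n φ e E)).1
    (boolize_posIn n (Pos φ) true e E hPosPos)).mp hEq
end
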